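/- Termination of ASLD trees: for any query G, program P, and well-quasi-order ≤ on atoms, the ASLD tree for G in P via any computation rule, using ≤ for the admissibility checks of derive steps against stack contents, is finite. -/

import Mathlib

/-! Basic syntax of definite logic programs: first-order terms, atoms,
substitutions, most general unifiers and clauses. -/

abbrev Var := ℕ

inductive Tm : Type
  | var : Var → Tm
  | fn : ℕ → List Tm → Tm

abbrev Subst := Var → Tm

def Tm.subst (σ : Subst) : Tm → Tm
  | .var v => σ v
  | .fn f ts => .fn f (ts.attach.map fun t => Tm.subst σ t.1)
decreasing_by simp only [Tm.fn.sizeOf_spec]; have := List.sizeOf_lt_of_mem t.2; omega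

structure Atom where
  pred : ℕ
  args : List Tm

def Atom.subst (σ : Subst) (A : Atom) : Atom := ⟨A.pred, A.args.map (Tm.subst σ)⟩

/-- The identity substitution. -/
def idS : Subst := Tm.var

/-- Composition of substitutions: `(σ.comp τ) t = τ(σ(t))`. -/
def Subst.comp (σ τ : Subst) : Subst := fun v => Tm.subst τ (σ v)

def Unifies (θ : Subst) (A B : Atom) : Prop := A.subst θ = B.subst θ

/-- `θ` is a most general unifier of atoms `A` and `B`. -/
def IsMgu (θ : Subst) (A B : Atom) : Prop :=
  Unifies θ A B ∧ ∀ τ, Unifies τ A B → ∃ δ, ∀ v, τ v = Tm.subst δ (θ v)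

structure Clause where
  head : Atom
  body : List Atom

/-! ASLD resolution: goals are lists of items, where an item is either the
pop-mark `↑` or an atom annotated (as ghost information) with the list of its
ancestors, nearest ancestor first; ancestors are recorded in the instantiation
state they had when they were selected.  A state pairs a goal with the
ancestor stack (head = top of the stack). -/

inductive GItem : Type
  | pop : GItem
  | atom : Atom → List Atom → GItem

def GItem.isPop : GItem → Bool
  | .pop => true
  | _ => false

/-- Apply a substitution to the atom of an item (annotations, which are
snapshots, are left untouched). -/
def instG (θ : Subst) : GItem → GItem
  | .pop => .pop
  | .atom A anc => .atom (A.subst θ) anc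

structure AState where
  goal : List GItem
  stack : List Atom

/-- `Admissible wqo A AS`: no element of the sequence `AS` is `wqo`-below the
new atom `A`. -/
def Admissible (wqo : Atom → Atom → Prop) (A : Atom) (AS : List Atom) : Prop :=
  ∀ B ∈ AS, ¬ wqo B A

/-- ASLD resolution steps.  **derive** selects (via an arbitrary computation
rule) an atom `A` of the goal, provided the leftmost item of the goal is not a
`↑` mark and `A` is admissible w.r.t. the contents of the ancestor stack;
it replaces the goal by the instantiated clause body placed at the front,
followed by a `↑` mark and the instantiated remaining atoms, and pushes `A`
onto the stack.  **popDerive** applies when the leftmost item is `↑`: it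
removes the mark and pops the stack. -/
inductive AStep (P : List Clause) (wqo : Atom → Atom → Prop) : AState → AState → Prop
  | derive (pre post : List GItem) (A : Atom) (anc : List Atom) (C : Clause)
      (θ : Subst) (AS : List Atom)
      (hC : C ∈ P) (hmgu : IsMgu θ A C.head)
      (hleft : (pre ++ GItem.atom A anc :: post).head? ≠ some GItem.pop)
      (hadm : Admissible wqo A AS) :
      AStep P wqo ⟨pre ++ GItem.atom A anc :: post, AS⟩
        ⟨(C.body.map fun B => GItem.atom (B.subst θ) (A :: anc)) ++
            GItem.pop :: (pre ++ post).map (instG θ), A :: AS⟩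
  | popDerive (G : List GItem) (T : Atom) (AS : List Atom) :
      AStep P wqo ⟨GItem.pop :: G, T :: AS⟩ ⟨G, AS⟩

/-- The initial ASLD state for a query `Q`: all atoms have an empty ancestor
annotation and the stack is empty. -/
def initState (Q : List Atom) : AState :=
  ⟨Q.map fun A => GItem.atom A [], []⟩

/-- ASLD steps where the selected atom is chosen by a fixed (arbitrary)
computation rule `R`, giving the position of the selected atom in the goal,
and where the (unique up to renaming) mgu is computed by a fixed unification
function `mguOf`; the branching of the ASLD tree is thus over the (finitely
many) program clauses. -/
inductive AStepDet (P : List Clause) (wqo : Atom → Atom → Prop)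
    (R : List GItem → ℕ) (mguOf : Atom → Atom → Option Subst) :
    AState → AState → Prop
  | derive (pre post : List GItem) (A : Atom) (anc : List Atom) (C : Clause)
      (θ : Subst) (AS : List Atom)
      (hC : C ∈ P) (hmgu : mguOf A C.head = some θ)
      (hsel : pre.length = R (pre ++ GItem.atom A anc :: post))
      (hleft : (pre ++ GItem.atom A anc :: post).head? ≠ some GItem.pop)
      (hadm : Admissible wqo A AS) :
      AStepDet P wqo R mguOf ⟨pre ++ GItem.atom A anc :: post, AS⟩
        ⟨(C.body.map fun B => GItem.atom (B.subst θ) (A :: anc)) ++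
            GItem.pop :: (pre ++ post).map (instG θ), A :: AS⟩
  | popDerive (G : List GItem) (T : Atom) (AS : List Atom) :
      AStepDet P wqo R mguOf ⟨GItem.pop :: G, T :: AS⟩ ⟨G, AS⟩

/-- A relation `r` is a well-quasi-order if it is reflexive and transitive and
every infinite sequence contains indices `i < j` with `r (s i) (s j)`. -/
def IsWqo {S : Type*} (r : S → S → Prop) : Prop :=
  Reflexive r ∧ Transitive r ∧ ∀ s : ℕ → S, ∃ i j, i < j ∧ r (s i) (s j)


/-! ### Auxiliary development for the termination proof -/

section ASLDAux

open scoped Classical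

/-- Extension of a stack by an admissible atom. -/
def ExtRel (wqo : Atom → Atom → Prop) : List Atom → List Atom → Prop :=
  fun AS' AS => ∃ A, AS' = A :: AS ∧ Admissible wqo A AS

/-- A stack is "bad": every element is admissible over the part below it. -/
def BadL (wqo : Atom → Atom → Prop) : List Atom → Prop
  | [] => True
  | A :: AS => Admissible wqo A AS ∧ BadL wqo AS

theorem badL_tail {wqo : Atom → Atom → Prop} : ∀ {AS : List Atom},
    BadL wqo AS → BadL wqo AS.tail
  | [], h => h
  | _ :: _, h => h.2

theorem extRel_wf (wqo : Atom → Atom → Prop) (hwqo : IsWqo wqo) :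
    WellFounded (ExtRel wqo) := by
  by_contra hwf
  have hex : ∃ AS, ¬ Acc (ExtRel wqo) AS := by
    by_contra hall
    push_neg at hall
    exact hwf ⟨hall⟩
  obtain ⟨a₀, ha₀⟩ := hex
  have hch : ∀ x : {AS : List Atom // ¬ Acc (ExtRel wqo) AS},
      ∃ y : {AS : List Atom // ¬ Acc (ExtRel wqo) AS}, ExtRel wqo y.1 x.1 := by
    rintro ⟨x, hx⟩
    obtain ⟨y, hy, hr⟩ := exists_not_acc_lt_of_not_acc hx
    exact ⟨⟨y, hy⟩, hr⟩
  choose g hg using hch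
  let f : ℕ → List Atom := fun n => (g^[n] ⟨a₀, ha₀⟩).1
  have hstep : ∀ n : ℕ, ExtRel wqo (f (n + 1)) (f n) := by
    intro n
    have : g^[n + 1] ⟨a₀, ha₀⟩ = g (g^[n] ⟨a₀, ha₀⟩) :=
      Function.iterate_succ_apply' g n _
    simpa only [f, this] using hg (g^[n] ⟨a₀, ha₀⟩)
  choose A hA hAdm using hstep
  have hmem : ∀ i j : ℕ, i < j → A i ∈ f j := by
    intro i j hij
    induction j with
    | zero => omega
    | succ j ih =>
      rw [hA j]
      rcases Nat.lt_succ_iff_lt_or_eq.1 hij with h | h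
      · exact List.mem_cons_of_mem _ (ih h)
      · subst h; exact List.mem_cons_self
  obtain ⟨i, j, hij, hw⟩ := hwqo.2.2 A
  exact hAdm j (A i) (hmem i j hij) hw

/-- Ordinal rank of a stack in the (well-founded) admissible-extension
relation. -/
noncomputable def rnk {wqo : Atom → Atom → Prop} (h : WellFounded (ExtRel wqo))
    (AS : List Atom) : Ordinal :=
  (h.apply AS).rank

theorem rnk_cons_lt {wqo : Atom → Atom → Prop} (h : WellFounded (ExtRel wqo))
    {A : Atom} {AS : List Atom} (hadm : Admissible wqo A AS) :
    rnk h (A :: AS) < rnk h AS :=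
  Acc.rank_lt_of_rel (h.apply AS) ⟨A, rfl, hadm⟩

theorem rnk_tail_le {wqo : Atom → Atom → Prop} (h : WellFounded (ExtRel wqo))
    {AS : List Atom} (hbad : BadL wqo AS) : rnk h AS ≤ rnk h AS.tail := by
  cases AS with
  | nil => exact le_rfl
  | cons A AS => exact (rnk_cons_lt h hbad.1).le

/-- Stack remaining after processing a list of goal items (each `↑` pops). -/
def aft : List GItem → List Atom → List Atom
  | [], AS => AS
  | GItem.pop :: G, AS => aft G AS.tail
  | GItem.atom _ _ :: G, AS => aft G AS

/-- The multiset of ranks of the stacks at which each goal item sits. -/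
def rkM (ρ : List Atom → Ordinal) : List GItem → List Atom → Multiset Ordinal
  | [], _ => 0
  | GItem.pop :: G, AS => ρ AS ::ₘ rkM ρ G AS.tail
  | GItem.atom _ _ :: G, AS => ρ AS ::ₘ rkM ρ G AS

theorem rkM_append (ρ : List Atom → Ordinal) :
    ∀ (X Y : List GItem) (AS : List Atom),
      rkM ρ (X ++ Y) AS = rkM ρ X AS + rkM ρ Y (aft X AS)
  | [], Y, AS => by simp [rkM, aft]
  | GItem.pop :: X, Y, AS => by
      simp [rkM, aft, rkM_append ρ X Y AS.tail, Multiset.cons_add]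
  | GItem.atom A anc :: X, Y, AS => by
      simp [rkM, aft, rkM_append ρ X Y AS, Multiset.cons_add]

theorem aft_map_instG (θ : Subst) : ∀ (X : List GItem) (AS : List Atom),
    aft (X.map (instG θ)) AS = aft X AS
  | [], AS => rfl
  | GItem.pop :: X, AS => by simp [instG, aft, aft_map_instG θ X AS.tail]
  | GItem.atom A anc :: X, AS => by simp [instG, aft, aft_map_instG θ X AS]

theorem rkM_map_instG (ρ : List Atom → Ordinal) (θ : Subst) :
    ∀ (X : List GItem) (AS : List Atom),
      rkM ρ (X.map (instG θ)) AS = rkM ρ X AS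
  | [], AS => rfl
  | GItem.pop :: X, AS => by simp [instG, rkM, rkM_map_instG ρ θ X AS.tail]
  | GItem.atom A anc :: X, AS => by simp [instG, rkM, rkM_map_instG ρ θ X AS]

theorem aft_body (θ : Subst) (anc : List Atom) :
    ∀ (L : List Atom) (AS : List Atom),
      aft (L.map fun B => GItem.atom (B.subst θ) anc) AS = AS
  | [], AS => rfl
  | B :: L, AS => by simp [aft, aft_body θ anc L AS]

theorem rkM_body (ρ : List Atom → Ordinal) (θ : Subst) (anc : List Atom) :
    ∀ (L : List Atom) (AS : List Atom),
      rkM ρ (L.map fun B => GItem.atom (B.subst θ) anc) AS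
        = Multiset.replicate L.length (ρ AS)
  | [], AS => rfl
  | B :: L, AS => by
      simp [rkM, rkM_body ρ θ anc L AS, Multiset.replicate_succ]

theorem rnk_aft_le {wqo : Atom → Atom → Prop} (h : WellFounded (ExtRel wqo)) :
    ∀ (X : List GItem) {AS : List Atom}, BadL wqo AS →
      BadL wqo (aft X AS) ∧ rnk h AS ≤ rnk h (aft X AS)
  | [], AS, hbad => ⟨hbad, le_rfl⟩
  | GItem.pop :: X, AS, hbad => by
      have h1 := badL_tail hbad
      have h2 := rnk_aft_le h X h1
      exact ⟨h2.1, (rnk_tail_le h hbad).trans h2.2⟩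
  | GItem.atom A anc :: X, AS, hbad => rnk_aft_le h X hbad

/-- The special Dershowitz–Manna style decrease: replacing one element `r` of
a multiset by finitely many strictly smaller elements decreases the
associated count function in the lexicographic order. -/
theorem dm_lt (M₀ N : Multiset Ordinal) (r : Ordinal) (hN : ∀ x ∈ N, x < r) :
    Finsupp.Lex ((· > ·) : Ordinal → Ordinal → Prop) ((· < ·) : ℕ → ℕ → Prop)
      (N + M₀).toFinsupp (r ::ₘ M₀).toFinsupp := by
  have hNr : N.count r = 0 :=
    Multiset.count_eq_zero.2 fun hmem => lt_irrefl r (hN r hmem)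
  refine ⟨r, fun j hj => ?_, ?_⟩
  · have hjN : N.count j = 0 :=
      Multiset.count_eq_zero.2 fun hmem => absurd (hN j hmem) (not_lt.2 hj.le)
    have hne : j ≠ r := ne_of_gt hj
    simp [Multiset.toFinsupp_apply, Multiset.count_add, hjN,
      Multiset.count_cons_of_ne hne]
  · simp [Multiset.toFinsupp_apply, Multiset.count_add, hNr,
      Multiset.count_cons_self]

theorem lex_wf : WellFounded (Finsupp.Lex ((· > ·) : Ordinal → Ordinal → Prop)
    ((· < ·) : ℕ → ℕ → Prop)) := by
  haveI : IsTrichotomous Ordinal (· > ·) :=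
    ⟨fun a b h1 h2 => by rcases lt_trichotomy a b with h | h | h
                         exacts [(h2 h).elim, h, (h1 h).elim]⟩
  exact Finsupp.Lex.wellFounded' (fun n h => Nat.not_lt_zero n h)
    (wellFounded_lt) (Ordinal.lt_wf)

/-- A single ASLD step preserves badness of the stack and decreases the
rank-multiset measure. -/
theorem step_dec (P : List Clause) {wqo : Atom → Atom → Prop}
    (R : List GItem → ℕ) (mguOf : Atom → Atom → Option Subst)
    (h : WellFounded (ExtRel wqo)) {s t : AState}
    (hst : AStepDet P wqo R mguOf s t) (hbad : BadL wqo s.stack) :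
    BadL wqo t.stack ∧
      Finsupp.Lex ((· > ·) : Ordinal → Ordinal → Prop)
        ((· < ·) : ℕ → ℕ → Prop)
        (rkM (rnk h) t.goal t.stack).toFinsupp
        (rkM (rnk h) s.goal s.stack).toFinsupp := by
  cases hst with
  | popDerive G T AS =>
    refine ⟨hbad.2, ?_⟩
    have he : rkM (rnk h) (GItem.pop :: G) (T :: AS)
        = rnk h (T :: AS) ::ₘ rkM (rnk h) G AS := rfl
    have hd := dm_lt (rkM (rnk h) G AS) 0 (rnk h (T :: AS)) (by simp)
    rw [zero_add] at hd
    exact he ▸ hd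
  | derive pre post A anc C θ AS hC hm hsel hleft hadm =>
    refine ⟨⟨hadm, hbad⟩, ?_⟩
    have r'lt : rnk h (A :: AS) < rnk h (aft pre AS) :=
      lt_of_lt_of_le (rnk_cons_lt h hadm) (rnk_aft_le h pre hbad).2
    have hold : rkM (rnk h) (pre ++ GItem.atom A anc :: post) AS
        = rnk h (aft pre AS) ::ₘ
            (rkM (rnk h) pre AS + rkM (rnk h) post (aft pre AS)) := by
      rw [rkM_append]
      rw [show rkM (rnk h) (GItem.atom A anc :: post) (aft pre AS)
            = rnk h (aft pre AS) ::ₘ rkM (rnk h) post (aft pre AS) from rfl,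
          Multiset.add_cons]
    have hnew : rkM (rnk h)
          ((C.body.map fun B => GItem.atom (B.subst θ) (A :: anc)) ++
            GItem.pop :: (pre ++ post).map (instG θ)) (A :: AS)
        = (rnk h (A :: AS) ::ₘ
            Multiset.replicate C.body.length (rnk h (A :: AS))) +
            (rkM (rnk h) pre AS + rkM (rnk h) post (aft pre AS)) := by
      rw [rkM_append, rkM_body, aft_body]
      rw [show rkM (rnk h) (GItem.pop :: (pre ++ post).map (instG θ)) (A :: AS)
            = rnk h (A :: AS) ::ₘ rkM (rnk h) ((pre ++ post).map (instG θ)) AS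
            from rfl]
      rw [rkM_map_instG, rkM_append, Multiset.add_cons, Multiset.cons_add]
    rw [hold, hnew]
    refine dm_lt _ _ _ fun x hx => ?_
    rcases Multiset.mem_cons.1 hx with h' | h'
    · exact h' ▸ r'lt
    · exact (Multiset.eq_of_mem_replicate h') ▸ r'lt

/-- The (at most one) result of a derive step with clause `C` from state `s`. -/
def dRes (R : List GItem → ℕ) (mguOf : Atom → Atom → Option Subst)
    (s : AState) (C : Clause) : AState :=
  match s.goal.drop (R s.goal), s.goal.take (R s.goal), s.stack with
  | GItem.atom A anc :: post, pre, AS =>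
    match mguOf A C.head with
    | some θ =>
        ⟨(C.body.map fun B => GItem.atom (B.subst θ) (A :: anc)) ++
          GItem.pop :: (pre ++ post).map (instG θ), A :: AS⟩
    | none => s
  | _, _, _ => s

/-- The (at most one) result of a pop-derive step from state `s`. -/
def popRes : AState → AState
  | ⟨GItem.pop :: G, _ :: AS⟩ => ⟨G, AS⟩
  | s => s

theorem succ_subset (P : List Clause) (wqo : Atom → Atom → Prop)
    (R : List GItem → ℕ) (mguOf : Atom → Atom → Option Subst) (s : AState) :
    {t | AStepDet P wqo R mguOf s t} ⊆
      insert (popRes s) ((dRes R mguOf s) '' {C | C ∈ P}) := by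
  intro t ht
  cases ht with
  | popDerive G T AS => exact Set.mem_insert_iff.2 (Or.inl rfl)
  | derive pre post A anc C θ AS hC hm hsel hleft hadm =>
    refine Set.mem_insert_iff.2 (Or.inr ⟨C, hC, ?_⟩)
    have h1 : (pre ++ GItem.atom A anc :: post).drop
        (R (pre ++ GItem.atom A anc :: post)) = GItem.atom A anc :: post := by
      rw [← hsel]; exact List.drop_left (l₁ := pre)
    have h2 : (pre ++ GItem.atom A anc :: post).take
        (R (pre ++ GItem.atom A anc :: post)) = pre := by
      rw [← hsel]; exact List.take_left (l₁ := pre)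
    simp only [dRes, h1, h2, hm]

theorem succ_finite (P : List Clause) (wqo : Atom → Atom → Prop)
    (R : List GItem → ℕ) (mguOf : Atom → Atom → Option Subst) (s : AState) :
    {t | AStepDet P wqo R mguOf s t}.Finite :=
  Set.Finite.subset (((P.finite_toSet).image (dRes R mguOf s)).insert (popRes s))
    (succ_subset P wqo R mguOf s)

theorem chains_finite (P : List Clause) (wqo : Atom → Atom → Prop)
    (hwqo : IsWqo wqo) (R : List GItem → ℕ)
    (mguOf : Atom → Atom → Option Subst) :
    ∀ s : AState, BadL wqo s.stack →
      {l : List AState | l.head? = some s ∧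
        List.Chain' (AStepDet P wqo R mguOf) l}.Finite := by
  have hwf : WellFounded (ExtRel wqo) := extRel_wf wqo hwqo
  have hmeas : WellFounded (InvImage
      (Finsupp.Lex ((· > ·) : Ordinal → Ordinal → Prop)
        ((· < ·) : ℕ → ℕ → Prop))
      (fun s : AState => (rkM (rnk hwf) s.goal s.stack).toFinsupp)) :=
    InvImage.wf _ lex_wf
  intro s
  refine WellFounded.induction hmeas (C := fun s => BadL wqo s.stack →
      {l : List AState | l.head? = some s ∧
        List.Chain' (AStepDet P wqo R mguOf) l}.Finite) s ?_
  intro s IH hbad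
  have hsub : {l : List AState | l.head? = some s ∧
        List.Chain' (AStepDet P wqo R mguOf) l} ⊆
      insert [s] (⋃ t ∈ {t | AStepDet P wqo R mguOf s t},
        (List.cons s) '' {l : List AState | l.head? = some t ∧
          List.Chain' (AStepDet P wqo R mguOf) l}) := by
    rintro l ⟨hh, hc⟩
    cases l with
    | nil => simp at hh
    | cons a tl =>
      obtain rfl : a = s := by simpa using hh
      cases tl with
      | nil => exact Set.mem_insert _ _
      | cons b tl' =>
        have hc' := List.isChain_cons_cons.1 hc
        exact Set.mem_insert_iff.2 (Or.inr
          (Set.mem_biUnion hc'.1 ⟨b :: tl', ⟨rfl, hc'.2⟩, rfl⟩))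
  refine Set.Finite.subset (Set.Finite.insert _
    (Set.Finite.biUnion (succ_finite P wqo R mguOf s) ?_)) hsub
  intro t ht
  obtain ⟨hb, hlt⟩ := step_dec P R mguOf hwf ht hbad
  exact (IH t hlt hb).image _

end ASLDAux

/-- Termination of ASLD trees: for any query `Q`, (finite) program `P`, and
well-quasi-order `≤` on atoms, the ASLD tree for `Q` in `P` via any
computation rule `R`, using `≤` for the admissibility checks of the derive
steps against the stack contents, is finite: the set of its nodes — the ASLD
derivations from the initial state — is finite. -/
theorem asld_tree_finite (P : List Clause) (wqo : Atom → Atom → Prop)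
    (hwqo : IsWqo wqo) (R : List GItem → ℕ)
    (mguOf : Atom → Atom → Option Subst)
    (hmgu : ∀ A B θ, mguOf A B = some θ → IsMgu θ A B)
    (Q : List Atom) :
    {l : List AState | l.head? = some (initState Q) ∧
        List.Chain' (AStepDet P wqo R mguOf) l}.Finite :=
  chains_finite P wqo hwqo R mguOf (initState Q) trivial
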